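/- For distinct bases A, B of a matroid, if i ∈ A \ B is an element of minimum weight a_i among all elements of the symmetric difference A Δ B (for a given weight function a : N → ℝ), then there exists j ∈ B \ A such that (A \ {i}) ∪ {j} is a basis and a((A\{i})∪{j}) ≥ a(A). -/

import Mathlib

theorem exchange_min_weight_element {α : Type*} [Fintype α] (M : Matroid α) (a : α → ℝ)
    (A B : Set α) (hA : M.IsBase A) (hB : M.IsBase B) (hAB : A ≠ B)
    (i : α) (hi : i ∈ A \ B) (hmin : ∀ k ∈ symmDiff A B, a i ≤ a k) :
    ∃ j ∈ B \ A, M.IsBase ((A \ {i}) ∪ {j}) ∧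
      (∑ᶠ k ∈ A, a k) ≤ ∑ᶠ k ∈ (A \ {i}) ∪ {j}, a k := by
  obtain ⟨j, hj, hbase⟩ := hA.exchange hB hi
  refine ⟨j, hj, by rwa [Set.union_singleton], ?_⟩
  have hji : a i ≤ a j := hmin j (by simp [symmDiff_def, hj.1, hj.2])
  have hdisj : Disjoint (A \ {i}) ({j} : Set α) := by
    simp [Set.disjoint_singleton_right, hj.2]
  have hfin : ∀ s : Set α, (s ∩ Function.support a).Finite :=
    fun s => (Set.toFinite _)
  rw [finsum_mem_union hdisj (Set.toFinite _) (Set.toFinite _), finsum_mem_singleton]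
  have : (∑ᶠ k ∈ A, a k) = (∑ᶠ k ∈ A \ {i}, a k) + a i := by
    rw [← finsum_mem_singleton (a := i) (f := a), ← finsum_mem_union
      (by simp [Set.disjoint_singleton_right]) (Set.toFinite _) (Set.toFinite _)]
    congr 1
    rw [Set.diff_union_self, Set.union_singleton, Set.insert_eq_self.2 hi.1]
  linarith
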